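/- Let G = (V, E) be a finite directed graph with no self-loops and let S ⊆ V induce a connected subgraph. Then the vector g_S = (χ_S, χ_{δ⁺(S)} − χ_{δ⁻(S)}) ∈ ℤ^V × ℤ^E is a ⊑-minimal element of (ker_ℤ(A_TV)) \ {0}; that is, g_S lies in the Graver basis 𝔊_{A_TV}. -/

import Mathlib

open scoped Classical

/-- The undirected support graph of the directed edge set `E`. -/
def undirGraph {V : Type*} (E : Finset (V × V)) : SimpleGraph V where
  Adj u v := u ≠ v ∧ ((u, v) ∈ E ∨ (v, u) ∈ E)
  symm := by
    constructor
    intro u v h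
    exact ⟨h.1.symm, h.2.elim Or.inr Or.inl⟩
  loopless := by constructor; intro u h; exact h.1 rfl

/-- `S ⊆ V` induces a connected subgraph of the (undirected version of the) graph. -/
def InducesConnected {V : Type*} (E : Finset (V × V)) (S : Set V) : Prop :=
  S.Nonempty ∧ ((undirGraph E).induce S).Connected

/-- Integer indicator vector of a set of vertices. -/
noncomputable def chiV {V : Type*} (S : Set V) : V → ℤ :=
  S.indicator 1

/-- Integer indicator vector of a set of edges. -/
noncomputable def chiE {V : Type*} {E : Finset (V × V)}
    (T : Set {e : V × V // e ∈ E}) : {e : V × V // e ∈ E} → ℤ :=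
  T.indicator 1

/-- Outgoing edges of `S`. -/
def deltaPlus {V : Type*} (E : Finset (V × V)) (S : Set V) :
    Set {e : V × V // e ∈ E} :=
  {e | (e : V × V).1 ∈ S ∧ (e : V × V).2 ∉ S}

/-- Incoming edges of `S`. -/
def deltaMinus {V : Type*} (E : Finset (V × V)) (S : Set V) :
    Set {e : V × V // e ∈ E} :=
  {e | (e : V × V).1 ∉ S ∧ (e : V × V).2 ∈ S}

/-- The conformal (sign-compatible, coordinatewise) partial order `x ⊑ y`. -/
def Sqle {ι : Type*} (x y : ι → ℤ) : Prop :=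
  ∀ i, 0 ≤ x i * y i ∧ |x i| ≤ |y i|

/-- `(x, a)` lies in the integer kernel of `A_TV`. -/
def InKerATV {V : Type*} (E : Finset (V × V)) (x : V → ℤ)
    (a : {e : V × V // e ∈ E} → ℤ) : Prop :=
  ∀ e : {e : V × V // e ∈ E}, x (e : V × V).1 - x (e : V × V).2 = a e

/-- `(x, a)` is a Graver basis element of `A_TV`: a `⊑`-minimal nonzero
element of the integer kernel. -/
def InGraverATV {V : Type*} (E : Finset (V × V)) (x : V → ℤ)
    (a : {e : V × V // e ∈ E} → ℤ) : Prop :=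
  InKerATV E x a ∧ ¬(x = 0 ∧ a = 0) ∧
    ∀ (x' : V → ℤ) (a' : {e : V × V // e ∈ E} → ℤ),
      InKerATV E x' a' → ¬(x' = 0 ∧ a' = 0) → Sqle x' x → Sqle a' a →
        x' = x ∧ a' = a

/-- For every `S ⊆ V` inducing a connected subgraph, the
vector `g_S = (χ_S, χ_{δ⁺(S)} − χ_{δ⁻(S)})` is a `⊑`-minimal element of
`ker_ℤ(A_TV) \ {0}`, i.e. it lies in the Graver basis `𝔊_{A_TV}`. -/
private lemma reachable_eq_aux {α : Type*} {G : SimpleGraph α} {f : α → ℤ}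
    (h : ∀ a b, G.Adj a b → f a = f b) {u v : α} (hr : G.Reachable u v) :
    f u = f v := by
  obtain ⟨w⟩ := hr
  induction w with
  | nil => rfl
  | cons h' w ih => exact (h _ _ h').trans ih

theorem connected_indicator_mem_graver
    {V : Type*} [Fintype V] [DecidableEq V] (E : Finset (V × V))
    (hloop : ∀ e ∈ E, e.1 ≠ e.2)
    (S : Set V) (hS : InducesConnected E S) :
    InGraverATV E (chiV S) (chiE (deltaPlus E S) - chiE (deltaMinus E S)) := by
  obtain ⟨hne, hconn⟩ := hS
  have hchiV : ∀ u, chiV S u = if u ∈ S then 1 else 0 := by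
    intro u; simp [chiV, Set.indicator]
  set a : {e : V × V // e ∈ E} → ℤ := chiE (deltaPlus E S) - chiE (deltaMinus E S)
    with ha_def
  have haval : ∀ e : {e : V × V // e ∈ E},
      a e = (if (e : V × V).1 ∈ S ∧ (e : V × V).2 ∉ S then 1 else 0)
            - (if (e : V × V).1 ∉ S ∧ (e : V × V).2 ∈ S then 1 else 0) := by
    intro e
    simp [ha_def, chiE, Set.indicator, deltaPlus, deltaMinus, Set.mem_setOf_eq]
  have hker : InKerATV E (chiV S) a := by
    intro e
    rw [haval e, hchiV, hchiV]
    by_cases h1 : (e : V × V).1 ∈ S <;> by_cases h2 : (e : V × V).2 ∈ S <;>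
      simp [h1, h2]
  refine ⟨hker, ?_, ?_⟩
  · rintro ⟨hx0, -⟩
    obtain ⟨v, hv⟩ := hne
    have := congrFun hx0 v
    rw [hchiV] at this
    simp [hv] at this
  · intro x' a' hker' hnz' hx ha
    have hx01 : ∀ u, x' u = 0 ∨ (u ∈ S ∧ x' u = 1) := by
      intro u
      obtain ⟨h1, h2⟩ := hx u
      rw [hchiV] at h1 h2
      by_cases hu : u ∈ S
      · have h1' : 0 ≤ x' u := by simpa [hu] using h1
        have h2' : |x' u| ≤ 1 := by simpa [hu] using h2
        rw [abs_le] at h2'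
        rcases eq_or_ne (x' u) 0 with h0 | h0
        · exact Or.inl h0
        · exact Or.inr ⟨hu, by omega⟩
      · have h2' : |x' u| ≤ 0 := by simpa [hu] using h2
        exact Or.inl (by simpa [abs_nonpos_iff] using h2')
    have hint : ∀ u v : V, (hyp : (u, v) ∈ E) → u ∈ S → v ∈ S → x' u = x' v := by
      intro u v he hu hv
      have hae : a ⟨(u, v), he⟩ = 0 := by
        rw [haval]; simp [hu, hv]
      have h2 := (ha ⟨(u, v), he⟩).2
      rw [hae] at h2
      have ha0 : a' ⟨(u, v), he⟩ = 0 := by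
        simpa [abs_nonpos_iff] using h2
      have hk := hker' ⟨(u, v), he⟩
      rw [ha0] at hk
      have hk' : x' u - x' v = 0 := hk
      omega
    have hconst : ∀ u ∈ S, ∀ v ∈ S, x' u = x' v := by
      intro u hu v hv
      have hr := hconn.preconnected ⟨u, hu⟩ ⟨v, hv⟩
      refine reachable_eq_aux (f := fun p : S => x' p) ?_ hr
      rintro ⟨p, hp⟩ ⟨q, hq⟩ hadj
      obtain ⟨-, hor⟩ : (undirGraph E).Adj p q := hadj
      rcases hor with h | h
      · exact hint p q h hp hq
      · exact (hint q p h hq hp).symm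
    have hx'ne : x' ≠ 0 := by
      intro h0
      apply hnz'
      refine ⟨h0, funext fun e => ?_⟩
      have hk := hker' e
      rw [h0] at hk
      simpa using hk.symm
    obtain ⟨u0, hu0⟩ : ∃ u, x' u ≠ 0 := by
      by_contra h; push_neg at h; exact hx'ne (funext h)
    have hu0' := (hx01 u0).resolve_left hu0
    have hxS : ∀ u ∈ S, x' u = 1 := fun u hu =>
      (hconst u hu u0 hu0'.1).trans hu0'.2
    have hxeq : x' = chiV S := by
      funext u
      rw [hchiV]
      by_cases hu : u ∈ S
      · simp [hu, hxS u hu]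
      · simp only [hu, if_neg, not_false_iff]
        rcases hx01 u with h | h
        · exact h
        · exact absurd h.1 hu
    refine ⟨hxeq, funext fun e => ?_⟩
    rw [← hker' e, hxeq, hker e]
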